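/- Let L/F be a finite Galois extension of fields with Galois group G, and let S be a finite G-set. Let L[S] denote the L-vector space with basis indexed by S, on which G acts semilinearly by g(∑ ℓ_s [s]) = ∑ g(ℓ_s) [g(s)]. Then the natural map (L[S])^G ⊗_F L → L[S] is an isomorphism of L-vector spaces. -/

import Mathlib

open scoped TensorProduct

/-- The `F`-subspace of Galois-invariant elements of `L[S] = (S → L)` under the
semilinear action `g (∑ ℓ_s [s]) = ∑ g(ℓ_s) [g • s]`. -/
def galoisInvariants (F L : Type*) [Field F] [Field L] [Algebra F L]
    (S : Type*) [MulAction (L ≃ₐ[F] L) S] : Submodule F (S → L) where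
  carrier := {f | ∀ (g : L ≃ₐ[F] L) (s : S), g (f s) = f (g • s)}
  add_mem' := by
    intro f h hf hh g s
    simp only [Pi.add_apply, map_add, hf g s, hh g s]
  zero_mem' := by
    intro g s
    simp
  smul_mem' := by
    intro c f hf g s
    simp only [Pi.smul_apply, Algebra.smul_def, map_mul, AlgEquiv.commutes, hf g s]

/-- The natural `F`-linear map `(L[S])^G ⊗_F L → L[S]`, `x ⊗ ℓ ↦ ℓ • x`. -/
noncomputable def galoisInvariantsTensorMap (F L : Type*) [Field F] [Field L] [Algebra F L]
    (S : Type*) [MulAction (L ≃ₐ[F] L) S] :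
    (galoisInvariants F L S) ⊗[F] L →ₗ[F] (S → L) :=
  TensorProduct.lift
    (LinearMap.mk₂ F (fun x ℓ => ℓ • (x : S → L))
      (fun x y ℓ => by simp only [Submodule.coe_add, smul_add])
      (fun c x ℓ => by simp only [Submodule.coe_smul]; exact smul_comm ℓ c _)
      (fun x ℓ₁ ℓ₂ => add_smul ℓ₁ ℓ₂ _)
      (fun c x ℓ => smul_assoc c ℓ (x : S → L)))


open Module

section
variable (F L : Type*) [Field F] [Field L] [Algebra F L]

/-- Dedekind's linear independence of characters for `AlgEquiv`s. -/
lemma dedekindLI : LinearIndependent L (fun g : L ≃ₐ[F] L => (g : L → L)) := by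
  have h := linearIndependent_monoidHom L L
  exact h.comp (fun g : L ≃ₐ[F] L => (g : L →* L))
    (fun g h hgh => by ext x; exact DFunLike.ext_iff.1 hgh x)

variable [FiniteDimensional F L]

lemma dedekind' (c : (L ≃ₐ[F] L) → L) (h : ∀ ℓ : L, ∑ g : L ≃ₐ[F] L, c g * g ℓ = 0) :
    ∀ g, c g = 0 := by
  have := Fintype.linearIndependent_iff.mp (dedekindLI F L) c ?_
  · exact this
  · funext ℓ
    simpa [Finset.sum_apply] using h ℓ
end

section
variable (F L : Type*) [Field F] [Field L] [Algebra F L]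
    [FiniteDimensional F L] [IsGalois F L]

noncomputable def galEquiv : (L ≃ₐ[F] L) ≃ Fin (finrank F L) :=
  Fintype.equivFinOfCardEq (Nat.card_eq_fintype_card.symm.trans (IsGalois.card_aut_eq_finrank F L))

/-- The Galois "evaluation" matrix `(g (b j))` is invertible. -/
lemma galMatrix_isUnit :
    IsUnit (Matrix.of (fun i j : Fin (finrank F L) =>
      ((galEquiv F L).symm i) (Module.finBasis F L j))) := by
  set b := Module.finBasis F L
  set e := galEquiv F L
  rw [← Matrix.linearIndependent_rows_iff_isUnit]
  rw [Fintype.linearIndependent_iff]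
  intro c hc
  have hc' : ∀ j, ∑ i, c i * (e.symm i) (b j) = 0 := by
    intro j
    simpa [Finset.sum_apply] using congrFun hc j
  -- the F-linear map `ℓ ↦ ∑ i, c i * (e.symm i) ℓ` vanishes on the basis
  set l : L →ₗ[F] L := ∑ i, c i • ((e.symm i).toLinearMap) with hl
  have hlz : l = 0 := by
    apply b.ext
    intro j
    simpa [hl, LinearMap.sum_apply, AlgEquiv.toLinearMap_apply] using hc' j
  have key : ∀ g, c (e g) = 0 := by
    apply dedekind' F L
    intro ℓ
    have := congrArg (fun f : L →ₗ[F] L => f ℓ) hlz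
    simp only [hl, LinearMap.sum_apply, LinearMap.smul_apply, AlgEquiv.toLinearMap_apply,
      LinearMap.zero_apply, smul_eq_mul] at this
    rw [← this]
    exact (Fintype.sum_equiv e.symm _ _ (fun i => by rw [Equiv.apply_symm_apply])).symm
  intro i
  simpa using key (e.symm i)
end

section
variable (F L : Type*) [Field F] [Field L] [Algebra F L]
    [FiniteDimensional F L] [IsGalois F L]
    (S : Type*) [Fintype S] [MulAction (L ≃ₐ[F] L) S]

lemma key_indep (x : Fin (finrank F L) → (S → L))
    (hx : ∀ j, x j ∈ galoisInvariants F L S)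
    (h : ∑ j, (Module.finBasis F L j : L) • x j = 0) :
    ∀ j, x j = 0 := by
  set b := Module.finBasis F L
  set e := galEquiv F L
  set A := Matrix.of (fun i j : Fin (finrank F L) => ((e).symm i) (b j)) with hA
  have hAinj : Function.Injective A.mulVec :=
    Matrix.mulVec_injective_iff_isUnit.mpr (galMatrix_isUnit F L)
  intro j
  funext s
  have h0 : ∀ t : S, ∑ j', b j' * x j' t = 0 := by
    intro t
    simpa [Finset.sum_apply] using congrFun h t
  have hvec : A.mulVec (fun j' => x j' s) = 0 := by
    funext i
    set g := e.symm i
    have := congrArg g (h0 (g⁻¹ • s))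
    simp only [map_sum, map_mul, map_zero] at this
    calc A.mulVec (fun j' => x j' s) i
        = ∑ j', g (b j') * x j' s := by
          simp [Matrix.mulVec, dotProduct, hA, g]
      _ = ∑ j', g (b j') * g (x j' (g⁻¹ • s)) := by
          refine Finset.sum_congr rfl fun j' _ => ?_
          rw [hx j' g (g⁻¹ • s), smul_inv_smul]
      _ = 0 := this
  have h00 : A.mulVec (0 : Fin (finrank F L) → L) = 0 := by
    simp [Matrix.mulVec_zero]
  have := congrFun (hAinj (hvec.trans h00.symm)) j
  simpa using this
end

set_option linter.unusedSectionVars false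
set_option synthInstance.maxHeartbeats 1000000
set_option maxHeartbeats 1000000

section
variable (F L : Type*) [Field F] [Field L] [Algebra F L]
    [FiniteDimensional F L] [IsGalois F L]
    (S : Type*) [Fintype S] [MulAction (L ≃ₐ[F] L) S]

lemma tensor_repr (z : (galoisInvariants F L S) ⊗[F] L) :
    ∃ x : Fin (finrank F L) → (galoisInvariants F L S),
      z = ∑ j, x j ⊗ₜ[F] (Module.finBasis F L j : L) := by
  set b := Module.finBasis F L
  induction z using TensorProduct.induction_on with
  | zero => exact ⟨0, by simp⟩
  | tmul v ℓ =>
    refine ⟨fun j => (b.repr ℓ j) • v, ?_⟩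
    have : ∀ j, ((b.repr ℓ j) • v) ⊗ₜ[F] (b j : L) = v ⊗ₜ[F] ((b.repr ℓ j) • b j) := by
      intro j; rw [TensorProduct.smul_tmul]
    rw [Finset.sum_congr rfl (fun j _ => this j), ← TensorProduct.tmul_sum, b.sum_repr ℓ]
  | add z₁ z₂ h₁ h₂ =>
    obtain ⟨x₁, hx₁⟩ := h₁
    obtain ⟨x₂, hx₂⟩ := h₂
    exact ⟨x₁ + x₂, by simp [hx₁, hx₂, Finset.sum_add_distrib, TensorProduct.add_tmul]⟩

lemma map_injective : Function.Injective (galoisInvariantsTensorMap F L S) := by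
  rw [injective_iff_map_eq_zero]
  intro z hz
  obtain ⟨x, rfl⟩ := tensor_repr F L S z
  have hz' : ∑ j, (Module.finBasis F L j : L) • ((x j : S → L)) = 0 := by
    rw [← hz]
    rw [map_sum]
    refine Finset.sum_congr rfl fun j _ => ?_
    simp [galoisInvariantsTensorMap]
  have := key_indep F L S (fun j => (x j : S → L)) (fun j => (x j).2) hz'
  have hx0 : ∀ j, x j = 0 := fun j => Subtype.ext (this j)
  exact Finset.sum_eq_zero fun j _ => by rw [hx0 j, TensorProduct.zero_tmul]
end

section
variable (F L : Type*) [Field F] [Field L] [Algebra F L]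
    [FiniteDimensional F L] [IsGalois F L]
    (S : Type*) [Fintype S] [MulAction (L ≃ₐ[F] L) S]

/-- The "trace" element `t ↦ ∑_{g : g•s = t} g ℓ` is Galois-invariant. -/
lemma trace_elt_mem [DecidableEq S] (s : S) (ℓ : L) :
    (fun t => ∑ g : L ≃ₐ[F] L, if g • s = t then g ℓ else 0) ∈ galoisInvariants F L S := by
  classical
  intro h t
  simp only
  rw [map_sum]
  rw [show (∑ g : L ≃ₐ[F] L, h (if g • s = t then g ℓ else 0))
      = ∑ g : L ≃ₐ[F] L, if g • s = t then (h * g) ℓ else 0 from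
    Finset.sum_congr rfl fun g _ => by split <;> simp [AlgEquiv.mul_apply]]
  refine Fintype.sum_equiv (Equiv.mulLeft h) _ _ fun g => ?_
  simp only [Equiv.coe_mulLeft]
  congr 1
  · rw [eq_iff_iff]
    constructor
    · intro hg; rw [mul_smul, hg]
    · intro hg; rw [mul_smul] at hg; exact smul_left_cancel h hg

lemma span_invariants_top :
    Submodule.span L ((galoisInvariants F L S : Set (S → L))) = ⊤ := by
  classical
  by_contra hne
  obtain ⟨φ, hφ0, hφ⟩ := Submodule.exists_dual_map_eq_bot_of_lt_top
    (lt_top_iff_ne_top.mpr hne) inferInstance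
  have hker : ∀ f ∈ Submodule.span L ((galoisInvariants F L S : Set (S → L))), φ f = 0 := by
    intro f hf
    have : φ f ∈ Submodule.map φ (Submodule.span L _) := Submodule.mem_map_of_mem hf
    rw [hφ] at this
    exact (Submodule.mem_bot L).1 this
  set c : S → L := fun t => φ (Pi.single t 1) with hc
  have hφeval : ∀ f : S → L, φ f = ∑ t, f t * c t := by
    intro f
    conv_lhs => rw [← Finset.univ_sum_single f]
    rw [map_sum]
    refine Finset.sum_congr rfl fun t _ => ?_
    have : Pi.single t (f t) = f t • (Pi.single t (1 : L) : S → L) := by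
      funext u
      by_cases hu : t = u <;> simp [Pi.single_apply, hu]
    rw [this, map_smul, smul_eq_mul, hc]
  have hc0 : ∀ t, c t = 0 := by
    intro t
    have key : ∀ ℓ : L, ∑ g : L ≃ₐ[F] L, c (g • t) * g ℓ = 0 := by
      intro ℓ
      have h1 := hker _ (Submodule.subset_span (trace_elt_mem F L S t ℓ))
      rw [hφeval] at h1
      rw [← h1]
      calc ∑ g : L ≃ₐ[F] L, c (g • t) * g ℓ
          = ∑ g : L ≃ₐ[F] L, ∑ u : S, if g • t = u then g ℓ * c u else 0 := by
            refine Finset.sum_congr rfl fun g _ => ?_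
            rw [Finset.sum_ite_eq, if_pos (Finset.mem_univ _), mul_comm]
        _ = ∑ u : S, ∑ g : L ≃ₐ[F] L, if g • t = u then g ℓ * c u else 0 :=
            Finset.sum_comm
        _ = ∑ u : S, (∑ g : L ≃ₐ[F] L, if g • t = u then g ℓ else 0) * c u := by
            refine Finset.sum_congr rfl fun u _ => ?_
            rw [Finset.sum_mul]
            exact Finset.sum_congr rfl fun g _ => by rw [ite_mul, zero_mul]
    have := dedekind' F L (fun g => c (g • t)) key 1
    simpa using this
  exact hφ0 (LinearMap.ext fun f => by rw [hφeval]; simp [hc0])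

lemma map_surjective : Function.Surjective (galoisInvariantsTensorMap F L S) := by
  intro f
  have hf : f ∈ Submodule.span L ((galoisInvariants F L S : Set (S → L))) := by
    rw [span_invariants_top]; trivial
  -- the range is closed under L-scalar multiplication
  have hsmul : ∀ (ℓ : L) (z : (galoisInvariants F L S) ⊗[F] L),
      ∃ z', galoisInvariantsTensorMap F L S z' = ℓ • galoisInvariantsTensorMap F L S z := by
    intro ℓ z
    induction z using TensorProduct.induction_on with
    | zero => exact ⟨0, by rw [map_zero, smul_zero]⟩
    | tmul v m =>
      refine ⟨v ⊗ₜ[F] (ℓ * m), ?_⟩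
      simp [galoisInvariantsTensorMap, mul_smul]
    | add z₁ z₂ h₁ h₂ =>
      obtain ⟨w₁, hw₁⟩ := h₁
      obtain ⟨w₂, hw₂⟩ := h₂
      exact ⟨w₁ + w₂, by simp [hw₁, hw₂, smul_add]⟩
  induction hf using Submodule.span_induction with
  | mem v hv => exact ⟨⟨v, hv⟩ ⊗ₜ[F] 1, by simp [galoisInvariantsTensorMap]⟩
  | zero => exact ⟨0, by simp⟩
  | add f₁ f₂ _ _ h₁ h₂ =>
    obtain ⟨z₁, hz₁⟩ := h₁
    obtain ⟨z₂, hz₂⟩ := h₂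
    exact ⟨z₁ + z₂, by simp [hz₁, hz₂]⟩
  | smul ℓ f _ h =>
    obtain ⟨z, hz⟩ := h
    obtain ⟨z', hz'⟩ := hsmul ℓ z
    exact ⟨z', by rw [hz', hz]⟩
end

/-- For a finite Galois extension `L/F` with group `G` and a finite `G`-set `S`, the
natural map `(L[S])^G ⊗_F L → L[S]` is an isomorphism (bijective). -/
theorem stmt1 (F L : Type*) [Field F] [Field L] [Algebra F L]
    [FiniteDimensional F L] [IsGalois F L]
    (S : Type*) [Fintype S] [MulAction (L ≃ₐ[F] L) S] :
    Function.Bijective (galoisInvariantsTensorMap F L S) :=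
  ⟨map_injective F L S, map_surjective F L S⟩
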